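/- Let H₁, H₂, H₃ be positive functions with H₁² + H₂² - H₃² = 0 (Guichard net) and let H̄₁, H̄₂, H̄₃, A be functions with H̄₁² + H̄₂² - H̄₃² = α²A, A > 0, and α ≠ 0. Define φ_λ := (1/α²)(H₁H̄₁ + H₂H̄₂ - H₃H̄₃) + λ and R(Hᵢ) := Hᵢ - (2φ_λ/A)H̄ᵢ. Then R(H₁)² + R(H₂)² - R(H₃)² = (4α²λ/A)·φ_λ. In particular, R(H₁)² + R(H₂)² - R(H₃)² = 0 identically for λ = 0, so the induced Ribaucour transform with λ = 0 is again a Guichard net. -/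

import Mathlib

/-- the induced Ribaucour transform with λ = 0 of a Guichard net is
again a Guichard net. Pointwise algebraic identity. -/
theorem stmt_13 (H₁ H₂ H₃ Hb₁ Hb₂ Hb₃ A : EuclideanSpace ℝ (Fin 3) → ℝ)
    (α lam : ℝ) (hα : α ≠ 0) (hA : ∀ p, 0 < A p)
    (hpos : ∀ p, 0 < H₁ p ∧ 0 < H₂ p ∧ 0 < H₃ p)
    (hGuichard : ∀ p, H₁ p ^ 2 + H₂ p ^ 2 - H₃ p ^ 2 = 0)
    (hbar : ∀ p, Hb₁ p ^ 2 + Hb₂ p ^ 2 - Hb₃ p ^ 2 = α ^ 2 * A p)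
    (φ : EuclideanSpace ℝ (Fin 3) → ℝ)
    (hφ : ∀ p, φ p = (1 / α ^ 2) * (H₁ p * Hb₁ p + H₂ p * Hb₂ p - H₃ p * Hb₃ p) + lam)
    (R₁ R₂ R₃ : EuclideanSpace ℝ (Fin 3) → ℝ)
    (hR₁ : ∀ p, R₁ p = H₁ p - (2 * φ p / A p) * Hb₁ p)
    (hR₂ : ∀ p, R₂ p = H₂ p - (2 * φ p / A p) * Hb₂ p)
    (hR₃ : ∀ p, R₃ p = H₃ p - (2 * φ p / A p) * Hb₃ p) :
    (∀ p, R₁ p ^ 2 + R₂ p ^ 2 - R₃ p ^ 2 = (4 * α ^ 2 * lam / A p) * φ p)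
    ∧ (lam = 0 → ∀ p, R₁ p ^ 2 + R₂ p ^ 2 - R₃ p ^ 2 = 0) := by
  have main : ∀ p, R₁ p ^ 2 + R₂ p ^ 2 - R₃ p ^ 2 = (4 * α ^ 2 * lam / A p) * φ p := by
    intro p
    have hA' := (hA p).ne'
    have hS : H₁ p * Hb₁ p + H₂ p * Hb₂ p - H₃ p * Hb₃ p = α ^ 2 * (φ p - lam) := by
      rw [hφ p]; field_simp; ring
    have hG := hGuichard p
    have hb := hbar p
    rw [hR₁ p, hR₂ p, hR₃ p]
    field_simp
    linear_combination (A p)^2 * hG - 4 * φ p * A p * hS + 4 * φ p^2 * hb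
  exact ⟨main, fun h p => by rw [main p, h]; ring⟩
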